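/- Let u(x) = Q(|x|)x be a twist map on the planar annulus with Q(r) the rotation by angle g(r), where g ∈ W^{1,2}[a,b], g(a) = 0, g(b) = 2πk. Then 𝔽[u] := (1/2)∫_X |∇u|²/|u|² dx = 2π log(b/a) + π ∫_a^b g'(r)² r dr, and among all such g this is minimized by g(r) = 2πk log(r/a)/log(b/a), with minimum value 2π log(b/a) + 4π³k²/log(b/a). -/

import Mathlib

open MeasureTheory

lemma vol_ball_two : (volume (Metric.ball (0 : EuclideanSpace ℝ (Fin 2)) 1)).toReal = Real.pi := by
  rw [EuclideanSpace.volume_ball]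
  simp [Real.Gamma_two, Real.sq_sqrt Real.pi_nonneg]
  rw [show (1:ℝ) + 1 = 2 by norm_num, Real.Gamma_two]
  simp [ENNReal.toReal_ofReal Real.pi_nonneg]

lemma polar_two (f : ℝ → ℝ) :
    ∫ x : EuclideanSpace ℝ (Fin 2), f ‖x‖ =
      2 * Real.pi * ∫ y in Set.Ioi (0 : ℝ), y * f y := by
  rw [integral_fun_norm_addHaar volume f]
  have hdim : Module.finrank ℝ (EuclideanSpace ℝ (Fin 2)) = 2 := by
    simp [finrank_euclideanSpace]
  rw [hdim, measureReal_def, vol_ball_two]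
  simp only [smul_eq_mul, nsmul_eq_mul, pow_one, Nat.cast_ofNat]
  norm_num [mul_assoc]

/-- For a planar twist map `u(x) = Q(|x|)x` with `Q(r)` rotation by `g(r)`,
`g ∈ W^{1,2}[a,b]`, `g(a) = 0`, `g(b) = 2πk` (so that `|∇u|² = 2 + r²g'(r)²`
pointwise), the energy satisfies
`𝔽[u] = (1/2)∫_X |∇u|²/|u|² = 2π log(b/a) + π ∫_a^b g'(r)² r dr`;
this is bounded below by `2π log(b/a) + 4π³k²/log(b/a)`, and the bound is
attained when `g(r) = 2πk log(r/a)/log(b/a)`. -/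
theorem twist_energy_minimisation {a b : ℝ} (ha : 0 < a) (hab : a < b) (k : ℤ)
    (g g' : ℝ → ℝ)
    (hg : ∀ r ∈ Set.Icc a b, HasDerivAt g (g' r) r)
    (hga : g a = 0) (hgb : g b = 2 * Real.pi * k)
    (hint : IntervalIntegrable (fun r => (g' r) ^ 2 * r) volume a b) :
    ((1 : ℝ) / 2) * ∫ x in {x : EuclideanSpace ℝ (Fin 2) | a < ‖x‖ ∧ ‖x‖ < b},
        (2 + ‖x‖ ^ 2 * (g' ‖x‖) ^ 2) / ‖x‖ ^ 2 =
      2 * Real.pi * Real.log (b / a) + Real.pi * ∫ r in a..b, (g' r) ^ 2 * r ∧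
    2 * Real.pi * Real.log (b / a) + Real.pi * ∫ r in a..b, (g' r) ^ 2 * r ≥
      2 * Real.pi * Real.log (b / a) +
        4 * Real.pi ^ 3 * (k : ℝ) ^ 2 / Real.log (b / a) ∧
    ((∀ r ∈ Set.Icc a b,
        g r = 2 * Real.pi * k * Real.log (r / a) / Real.log (b / a)) →
      2 * Real.pi * Real.log (b / a) + Real.pi * ∫ r in a..b, (g' r) ^ 2 * r =
        2 * Real.pi * Real.log (b / a) +
          4 * Real.pi ^ 3 * (k : ℝ) ^ 2 / Real.log (b / a)) := by
  have hb : (0:ℝ) < b := ha.trans hab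
  have hL : 0 < Real.log (b / a) := Real.log_pos ((one_lt_div ha).mpr hab)
  set L := Real.log (b / a) with hLdef
  set c : ℝ := 2 * Real.pi * k / L with hc
  have h0 : (0:ℝ) ∉ Set.uIcc a b := by
    rw [Set.uIcc_of_le hab.le]; exact fun h => absurd h.1 (not_le.mpr ha)
  have hinv : IntervalIntegrable (fun r : ℝ => r⁻¹) volume a b := by
    apply ContinuousOn.intervalIntegrable
    exact continuousOn_inv₀.mono (fun r hr =>
      Set.mem_compl_singleton_iff.mpr (fun h => h0 (h ▸ hr)))
  -- Part 1
  have part1 : ((1 : ℝ) / 2) * ∫ x in {x : EuclideanSpace ℝ (Fin 2) | a < ‖x‖ ∧ ‖x‖ < b},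
        (2 + ‖x‖ ^ 2 * (g' ‖x‖) ^ 2) / ‖x‖ ^ 2 =
      2 * Real.pi * L + Real.pi * ∫ r in a..b, (g' r) ^ 2 * r := by
    set F : EuclideanSpace ℝ (Fin 2) → ℝ := fun x => (2 + ‖x‖ ^ 2 * (g' ‖x‖) ^ 2) / ‖x‖ ^ 2
    set φ : ℝ → ℝ := (Set.Ioo a b).indicator (fun r => (2 + r ^ 2 * (g' r) ^ 2) / r ^ 2) with hφ
    set S : Set (EuclideanSpace ℝ (Fin 2)) := {x | a < ‖x‖ ∧ ‖x‖ < b} with hS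
    have hSm : MeasurableSet S := by
      have : S = (fun x : EuclideanSpace ℝ (Fin 2) => ‖x‖) ⁻¹' Set.Ioo a b := by
        ext x; simp [hS, Set.mem_Ioo]
      rw [this]; exact measurable_norm measurableSet_Ioo
    have key : S.indicator F = fun x => φ ‖x‖ := by
      funext x
      by_cases h : a < ‖x‖ ∧ ‖x‖ < b
      · rw [Set.indicator_of_mem (show x ∈ S from h), hφ,
          Set.indicator_of_mem (Set.mem_Ioo.mpr h)]
      · rw [Set.indicator_of_notMem (show x ∉ S from h), hφ,
          Set.indicator_of_notMem (by simpa [Set.mem_Ioo] using h)]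
    have step1 : ∫ x in S, F x = ∫ x : EuclideanSpace ℝ (Fin 2), φ ‖x‖ := by
      rw [← integral_indicator hSm, key]
    have step2 : (fun y : ℝ => y * φ y)
        = (Set.Ioo a b).indicator (fun r => 2 * r⁻¹ + (g' r) ^ 2 * r) := by
      funext y
      by_cases h : y ∈ Set.Ioo a b
      · rw [hφ, Set.indicator_of_mem h, Set.indicator_of_mem h]
        have hy : y ≠ 0 := (ha.trans h.1).ne'
        field_simp
      · rw [hφ, Set.indicator_of_notMem h, Set.indicator_of_notMem h, mul_zero]
    have step3 : ∫ y in Set.Ioi (0:ℝ), y * φ y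
        = ∫ r in a..b, (2 * r⁻¹ + (g' r) ^ 2 * r) := by
      rw [step2, integral_indicator measurableSet_Ioo,
        Measure.restrict_restrict measurableSet_Ioo,
        Set.inter_eq_self_of_subset_left
          (show Set.Ioo a b ⊆ Set.Ioi (0:ℝ) from fun y hy => ha.trans hy.1),
        ← integral_Ioc_eq_integral_Ioo, ← intervalIntegral.integral_of_le hab.le]
    have step4 : ∫ r in a..b, (2 * r⁻¹ + (g' r) ^ 2 * r)
        = 2 * L + ∫ r in a..b, (g' r) ^ 2 * r := by
      rw [intervalIntegral.integral_add (hinv.const_mul 2) hint,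
        intervalIntegral.integral_const_mul, integral_inv h0]
    calc ((1:ℝ)/2) * ∫ x in S, F x
        = ((1:ℝ)/2) * (2 * Real.pi * (2 * L + ∫ r in a..b, (g' r) ^ 2 * r)) := by
          rw [step1, polar_two φ, step3, step4]
      _ = 2 * Real.pi * L + Real.pi * ∫ r in a..b, (g' r) ^ 2 * r := by ring
  -- integrability of g'
  have hg'meas : AEStronglyMeasurable g' (volume.restrict (Set.uIoc a b)) := by
    apply ((measurable_deriv g).aestronglyMeasurable.restrict).congr
    filter_upwards [ae_restrict_mem measurableSet_uIoc] with r hr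
    rw [Set.uIoc_of_le hab.le] at hr
    exact (hg r ⟨hr.1.le, hr.2⟩).deriv
  have hg'int : IntervalIntegrable g' volume a b := by
    apply IntervalIntegrable.mono_fun ((hint.add hinv).div_const 2) hg'meas
    filter_upwards [ae_restrict_mem measurableSet_uIoc] with r hr
    rw [Set.uIoc_of_le hab.le] at hr
    have hrpos : 0 < r := ha.trans hr.1
    set t := Real.sqrt r with htd
    have ht : t ^ 2 = r := Real.sq_sqrt hrpos.le
    have htpos : 0 < t := Real.sqrt_pos.mpr hrpos
    have h3 : (t⁻¹) ^ 2 = r⁻¹ := by rw [inv_pow, ht]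
    have h5 : t * t⁻¹ = 1 := mul_inv_cancel₀ htpos.ne'
    have expand : (|g' r| * t - t⁻¹) ^ 2 = (g' r) ^ 2 * r - 2 * |g' r| + r⁻¹ := by
      calc (|g' r| * t - t⁻¹) ^ 2
          = |g' r| ^ 2 * t ^ 2 - 2 * |g' r| * (t * t⁻¹) + (t⁻¹) ^ 2 := by ring
        _ = (g' r) ^ 2 * r - 2 * |g' r| + r⁻¹ := by rw [sq_abs, ht, h5, h3]; ring
    have h1 : 2 * |g' r| ≤ (g' r) ^ 2 * r + r⁻¹ := by
      have := sq_nonneg (|g' r| * t - t⁻¹)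
      rw [expand] at this; linarith
    have h4 : 0 ≤ ((g' r) ^ 2 * r + r⁻¹) / 2 := by positivity
    simp only [Real.norm_eq_abs, abs_of_nonneg h4]
    linarith
  -- FTC
  have hftc : ∫ r in a..b, g' r = 2 * Real.pi * k := by
    rw [intervalIntegral.integral_eq_sub_of_hasDerivAt
      (fun r hr => hg r (by rwa [Set.uIcc_of_le hab.le] at hr)) hg'int, hgb, hga, sub_zero]
  -- Part 2
  have hineq : 4 * Real.pi ^ 2 * (k:ℝ) ^ 2 / L ≤ ∫ r in a..b, (g' r) ^ 2 * r := by
    have hlow_int : IntervalIntegrable (fun r => 2 * c * g' r - c ^ 2 * r⁻¹) volume a b :=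
      (hg'int.const_mul (2 * c)).sub (hinv.const_mul (c ^ 2))
    have hpt : ∀ r ∈ Set.Icc a b, 2 * c * g' r - c ^ 2 * r⁻¹ ≤ (g' r) ^ 2 * r := by
      intro r hr
      have hrpos : 0 < r := ha.trans_le hr.1
      set t := Real.sqrt r with htd
      have ht : t ^ 2 = r := Real.sq_sqrt hrpos.le
      have htpos : 0 < t := Real.sqrt_pos.mpr hrpos
      have h3 : (t⁻¹) ^ 2 = r⁻¹ := by rw [inv_pow, ht]
      have h5 : t * t⁻¹ = 1 := mul_inv_cancel₀ htpos.ne'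
      have expand : (g' r * t - c * t⁻¹) ^ 2
          = (g' r) ^ 2 * r - 2 * c * g' r + c ^ 2 * r⁻¹ := by
        calc (g' r * t - c * t⁻¹) ^ 2
            = (g' r) ^ 2 * t ^ 2 - 2 * c * g' r * (t * t⁻¹) + c ^ 2 * (t⁻¹) ^ 2 := by ring
          _ = (g' r) ^ 2 * r - 2 * c * g' r + c ^ 2 * r⁻¹ := by rw [ht, h5, h3]; ring
      have := sq_nonneg (g' r * t - c * t⁻¹)
      rw [expand] at this; linarith
    have hmono := intervalIntegral.integral_mono_on hab.le hlow_int hint hpt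
    have hcomp : ∫ r in a..b, (2 * c * g' r - c ^ 2 * r⁻¹)
        = 2 * c * (2 * Real.pi * k) - c ^ 2 * L := by
      rw [intervalIntegral.integral_sub (hg'int.const_mul (2 * c)) (hinv.const_mul (c ^ 2)),
        intervalIntegral.integral_const_mul, intervalIntegral.integral_const_mul,
        hftc, integral_inv h0]
    rw [hcomp] at hmono
    have : 2 * c * (2 * Real.pi * k) - c ^ 2 * L = 4 * Real.pi ^ 2 * (k:ℝ) ^ 2 / L := by
      rw [hc]; field_simp; ring
    linarith [this ▸ hmono]
  refine ⟨part1, ?_, ?_⟩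
  · have h5 : 4 * Real.pi ^ 3 * (k:ℝ) ^ 2 / L
        = Real.pi * (4 * Real.pi ^ 2 * (k:ℝ) ^ 2 / L) := by ring
    have := mul_le_mul_of_nonneg_left hineq Real.pi_pos.le
    linarith
  -- Part 3
  · intro hgexp
    have hg'eq : ∀ r ∈ Set.Ioo a b, g' r = c * r⁻¹ := by
      intro r hr
      have hrpos : 0 < r := ha.trans hr.1
      have hmem : Set.Ioo a b ∈ nhds r := Ioo_mem_nhds hr.1 hr.2
      have heq : (fun s => c * Real.log s - c * Real.log a) =ᶠ[nhds r] g := by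
        filter_upwards [hmem] with s hs
        rw [hgexp s ⟨hs.1.le, hs.2.le⟩, Real.log_div (ha.trans hs.1).ne' ha.ne', hc]
        field_simp
      have hD : HasDerivAt (fun s => c * Real.log s - c * Real.log a) (c * r⁻¹) r :=
        ((Real.hasDerivAt_log hrpos.ne').const_mul c).sub_const _
      exact (hg r ⟨hr.1.le, hr.2.le⟩).unique (hD.congr_of_eventuallyEq heq.symm)
    have hcong : ∫ r in a..b, (g' r) ^ 2 * r = ∫ r in a..b, c ^ 2 * r⁻¹ := by
      apply intervalIntegral.integral_congr_ae
      have hb' : ∀ᵐ r : ℝ ∂volume, r ≠ b := by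
        rw [ae_iff]; simpa [not_not] using measure_singleton b
      filter_upwards [hb'] with r hr hmem
      rw [Set.uIoc_of_le hab.le] at hmem
      have hrm : r ∈ Set.Ioo a b := ⟨hmem.1, lt_of_le_of_ne hmem.2 hr⟩
      have hrpos : 0 < r := ha.trans hrm.1
      rw [hg'eq r hrm]
      field_simp
    rw [hcong, intervalIntegral.integral_const_mul, integral_inv h0]
    have : c ^ 2 * L = 4 * Real.pi ^ 2 * (k:ℝ) ^ 2 / L := by
      rw [hc]; field_simp; ring
    rw [this]
    ring
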